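/- Let Ω = {ω_1, ω_2, ω_3, ω_4} and let X: Ω → ℝ be given by X = (0, 1, 2, 3). Let Π_1 be the partition {{ω_1, ω_3}, {ω_2, ω_4}} and Π_2 the partition {{ω_1, ω_4}, {ω_2, ω_3}}, and let μ = (1/8, 3/8, 3/8, 1/8). Then Π = (Π_1, Π_2) has the fine-join property, E_μ[X | P] = 3/2 for every cell P of Π_1 and of Π_2, and X is non-separable at μ under Π with value 3/2. In particular, an injective security can be non-separable under an information structure with the fine-join property. -/

import Mathlib

noncomputable section
open scoped Classical
open Finset

/-- A partition of `Ω` given by its cell map: `C ω` is the cell containing `ω`. -/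
def IsPartitionFun {Ω : Type*} (C : Ω → Set Ω) : Prop :=
  (∀ ω, ω ∈ C ω) ∧ ∀ ω ω', ω' ∈ C ω → C ω' = C ω

/-- The fine-join property: the intersection of all traders' cells at `ω` is `{ω}`. -/
def FineJoin {Ω : Type*} {n : ℕ} (C : Fin n → Ω → Set Ω) : Prop :=
  ∀ ω ω', (∀ i, ω' ∈ C i ω) → ω' = ω

/-- A prior: a probability distribution on the finite state space. -/
def IsPrior {Ω : Type*} [Fintype Ω] (μ : Ω → ℝ) : Prop :=
  (∀ ω, 0 ≤ μ ω) ∧ ∑ ω, μ ω = 1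

/-- Support of a prior. -/
def suppSet {Ω : Type*} (μ : Ω → ℝ) : Set Ω := {ω | 0 < μ ω}

/-- Conditional expectation `E_μ[X | S]`. -/
def condExp {Ω : Type*} [Fintype Ω] (μ X : Ω → ℝ) (S : Set Ω) : ℝ :=
  (∑ ω, if ω ∈ S then μ ω * X ω else 0) / (∑ ω, if ω ∈ S then μ ω else 0)

/-- `X` is non-separable at prior `μ` with value `v` under the information structure `C`. -/
def NonSeparableAt {Ω : Type*} [Fintype Ω] {n : ℕ}
    (C : Fin n → Ω → Set Ω) (X μ : Ω → ℝ) (v : ℝ) : Prop :=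
  (∃ ω ∈ suppSet μ, X ω ≠ v) ∧
  ∀ (i : Fin n) (ω : Ω), ω ∈ suppSet μ → condExp μ X (C i ω) = v

/-- `X` is separable under the information structure `C`. -/
def SeparableSec {Ω : Type*} [Fintype Ω] {n : ℕ}
    (C : Fin n → Ω → Set Ω) (X : Ω → ℝ) : Prop :=
  ¬ ∃ (μ : Ω → ℝ) (v : ℝ), IsPrior μ ∧ NonSeparableAt C X μ v

/-- Arrow–Debreu security: pays `a` at one state, `b ≠ a` at all other states. -/
def ArrowDebreu {Ω : Type*} (X : Ω → ℝ) : Prop :=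
  ∃ (a b : ℝ) (ωs : Ω), a ≠ b ∧ X ωs = a ∧ ∀ ω, ω ≠ ωs → X ω = b

/-- Three-value form: pays `a < b < d` with `a` at one state, `d` at another, `b` elsewhere. -/
def ThreeValueForm {Ω : Type*} (X : Ω → ℝ) : Prop :=
  ∃ (a b d : ℝ) (ωa ωd : Ω), a < b ∧ b < d ∧ ωa ≠ ωd ∧
    X ωa = a ∧ X ωd = d ∧ ∀ ω, ω ≠ ωa → ω ≠ ωd → X ω = b

/-- The security `(0, 1, 2, 3)` on four states. -/
def X11 : Fin 4 → ℝ := ![0, 1, 2, 3]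

/-- Trader 1's partition `{{ω1, ω3}, {ω2, ω4}}` and
trader 2's partition `{{ω1, ω4}, {ω2, ω3}}`, as cell maps. -/
def C11 : Fin 2 → Fin 4 → Set (Fin 4) :=
  ![fun ω => if ω = 0 ∨ ω = 2 then ({0, 2} : Set (Fin 4)) else {1, 3},
    fun ω => if ω = 0 ∨ ω = 3 then ({0, 3} : Set (Fin 4)) else {1, 2}]

/-- The prior `(1/8, 3/8, 3/8, 1/8)`. -/
def μ11 : Fin 4 → ℝ := ![1 / 8, 3 / 8, 3 / 8, 1 / 8]


lemma condExp02 : condExp μ11 X11 ({0, 2} : Set (Fin 4)) = 3 / 2 := by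
  simp [condExp, Fin.sum_univ_four, μ11, X11]
  norm_num

lemma condExp13 : condExp μ11 X11 ({1, 3} : Set (Fin 4)) = 3 / 2 := by
  simp [condExp, Fin.sum_univ_four, μ11, X11]
  norm_num

lemma condExp03 : condExp μ11 X11 ({0, 3} : Set (Fin 4)) = 3 / 2 := by
  simp [condExp, Fin.sum_univ_four, μ11, X11]
  norm_num

lemma condExp12 : condExp μ11 X11 ({1, 2} : Set (Fin 4)) = 3 / 2 := by
  simp [condExp, Fin.sum_univ_four, μ11, X11]
  norm_num

lemma condExp_all (i : Fin 2) (ω : Fin 4) : condExp μ11 X11 (C11 i ω) = 3 / 2 := by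
  fin_cases i <;> fin_cases ω <;>
    simp only [C11, Matrix.cons_val_zero, Matrix.cons_val_one, Matrix.head_cons] <;>
    (first | exact condExp02 | exact condExp13 | exact condExp03 | exact condExp12)

/-- the injective security `(0,1,2,3)` is non-separable at the
prior `(1/8, 3/8, 3/8, 1/8)` with value `3/2`, under a fine-join structure. -/
theorem zeroOneTwoThree_nonseparable :
    (∀ i, IsPartitionFun (C11 i)) ∧ FineJoin C11 ∧ IsPrior μ11 ∧
    (∀ (i : Fin 2) (ω : Fin 4), condExp μ11 X11 (C11 i ω) = 3 / 2) ∧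
    NonSeparableAt C11 X11 μ11 (3 / 2) ∧ Function.Injective X11 := by
  refine ⟨?_, ?_, ?_, condExp_all, ⟨⟨0, by norm_num [suppSet, μ11], by norm_num [X11]⟩, fun i ω _ => condExp_all i ω⟩, ?_⟩
  · intro i
    constructor
    · intro ω
      fin_cases i <;> fin_cases ω <;> simp [C11]
    · intro ω ω' h
      fin_cases i <;> fin_cases ω <;> fin_cases ω' <;> simp_all [C11]
  · intro ω ω' h
    have h0 := h 0
    have h1 := h 1
    fin_cases ω <;> fin_cases ω' <;> simp_all [C11]
  · constructor
    · intro ω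
      fin_cases ω <;> norm_num [μ11]
    · norm_num [Fin.sum_univ_four, μ11, Matrix.cons_val_two, Matrix.cons_val_three]
  · intro a b hab
    fin_cases a <;> fin_cases b <;> simp_all [X11]
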